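/- For each n ≥ 1, the number of spanning trees of the level-n Schreier graph B_n of the Basilica group is τ(B_n) = 2^{(2^{n+2} + 3n − 5)/6} if n is odd, and τ(B_n) = 2^{(2^{n+2} + 3n − 4)/6} if n is even. -/

import Mathlib

/-- A finite multigraph on a vertex set `V`: a finite edge type together with an
incidence map assigning to each edge its unordered pair of endpoints
(loops and parallel edges are allowed). -/
structure Multigraph (V : Type) where
  /-- the type of edges -/
  Edge : Type
  /-- the edge type is finite -/
  fintypeEdge : Fintype Edge
  /-- equality of edges is decidable -/
  decEqEdge : DecidableEq Edge
  /-- the unordered pair of endpoints of an edge -/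
  inc : Edge → Sym2 V

attribute [instance] Multigraph.fintypeEdge Multigraph.decEqEdge

namespace Multigraph

variable {V : Type} [Fintype V] [DecidableEq V]

/-- The simple graph underlying the spanning subgraph of `G` with edge set `A`:
two distinct vertices are adjacent iff some edge in `A` has them as endpoints. -/
def toSimple (G : Multigraph V) (A : Finset G.Edge) : SimpleGraph V :=
  SimpleGraph.fromRel fun u v => ∃ e ∈ A, G.inc e = s(u, v)

/-- `G.comps A` is the number `k(A)` of connected components of the spanning
subgraph of `G` with edge set `A`. -/
noncomputable def comps (G : Multigraph V) (A : Finset G.Edge) : ℕ :=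
  Nat.card (G.toSimple A).ConnectedComponent

/-- The rank `r(A) = |V| - k(A)` of the spanning subgraph with edge set `A`. -/
noncomputable def rk (G : Multigraph V) (A : Finset G.Edge) : ℕ :=
  Fintype.card V - G.comps A

/-- The nullity `n(A) = |E(A)| - r(A)` of the spanning subgraph with edge set `A`. -/
noncomputable def nullity (G : Multigraph V) (A : Finset G.Edge) : ℕ :=
  A.card - G.rk A

/-- The Tutte polynomial
`T(G; x, y) = ∑_{A ⊆ E} (x - 1) ^ (r(E) - r(A)) * (y - 1) ^ n(A)`,
as a function of two real variables. -/
noncomputable def tutte (G : Multigraph V) (x y : ℝ) : ℝ :=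
  ∑ A ∈ (Finset.univ : Finset G.Edge).powerset,
    (x - 1) ^ (G.rk Finset.univ - G.rk A) * (y - 1) ^ (G.nullity A)

/-- The reliability polynomial `R(G, p)`: the probability that, when each edge is
independently active with probability `p`, every pair of vertices is joined by a
path of active edges (i.e. the spanning subgraph of active edges is connected). -/
noncomputable def reliability (G : Multigraph V) (p : ℝ) : ℝ :=
  ∑ A ∈ (Finset.univ : Finset G.Edge).powerset,
    if G.comps A = 1 then p ^ A.card * (1 - p) ^ (Fintype.card G.Edge - A.card) else 0

/-- The complexity `τ(G)`: the number of spanning subtrees of `G`, i.e. spanning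
subgraphs which are connected and have `|V| - 1` edges. -/
noncomputable def treeCount (G : Multigraph V) : ℕ :=
  Nat.card {A : Finset G.Edge // G.comps A = 1 ∧ A.card + 1 = Fintype.card V}

/-- The number of connected spanning subgraphs of `G`. -/
noncomputable def connCount (G : Multigraph V) : ℕ :=
  Nat.card {A : Finset G.Edge // G.comps A = 1}

/-- The number of spanning forests of `G`: spanning subgraphs containing no cycle,
i.e. with `|E(A)| = |V| - k(A)` (zero nullity). -/
noncomputable def forestCount (G : Multigraph V) : ℕ :=
  Nat.card {A : Finset G.Edge // A.card + G.comps A = Fintype.card V}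

/-- `σ` is an orientation of `G` if it assigns to every edge an ordered pair of
vertices whose underlying unordered pair is the pair of endpoints of the edge. -/
def IsOrientation (G : Multigraph V) (σ : G.Edge → V × V) : Prop :=
  ∀ e, s((σ e).1, (σ e).2) = G.inc e

/-- The number of acyclic orientations of `G`: orientations admitting no directed
cycle. -/
noncomputable def acyclicOrientationCount (G : Multigraph V) : ℕ :=
  Nat.card {σ : G.Edge → V × V //
    G.IsOrientation σ ∧ ∀ v : V, ¬ Relation.TransGen (fun u w => ∃ e, σ e = (u, w)) v v}

/-- A proper coloring of `G`: the two endpoints of every edge receive distinct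
colors. -/
def ProperColoring (G : Multigraph V) {α : Type} (c : V → α) : Prop :=
  ∀ e, ¬ (Sym2.map c (G.inc e)).IsDiag

/-- The number of proper colorings of `G` with `k` colors (the value `χ(G, k)` of
the chromatic polynomial at the natural number `k`). -/
noncomputable def chromCount (G : Multigraph V) (k : ℕ) : ℕ :=
  Nat.card {c : V → Fin k // G.ProperColoring c}

end Multigraph

mutual
  /-- The generator `a = e(b, id)` of the Basilica group, acting on the `n`-th
  level of the binary rooted tree: `a(1w) = 1w` and `a(0w) = 0 b(w)`. -/
  def basA : (n : ℕ) → (Fin n → Bool) → (Fin n → Bool)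
    | 0, v => v
    | n + 1, v =>
      match v 0 with
      | true => v
      | false => Fin.cons false (basB n (Fin.tail v))

  /-- The generator `b = ε(a, id)` of the Basilica group, acting on the `n`-th
  level of the binary rooted tree: `b(1w) = 0w` and `b(0w) = 1 a(w)`. -/
  def basB : (n : ℕ) → (Fin n → Bool) → (Fin n → Bool)
    | 0, v => v
    | n + 1, v =>
      match v 0 with
      | true => Fin.cons false (Fin.tail v)
      | false => Fin.cons true (basA n (Fin.tail v))
end

/-- The generator of the Basilica group indexed by a boolean tag. -/
def basGen (n : ℕ) : Bool → (Fin n → Bool) → (Fin n → Bool)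
  | true => basA n
  | false => basB n

/-- The level-`n` Schreier graph `B_n` of the Basilica group: vertices are the
binary words of length `n`, and for each generator `s ∈ {a, b}` and each vertex
`v` there is one edge joining `v` and `s(v)` (a loop when `s(v) = v`). -/
def basilica (n : ℕ) : Multigraph (Fin n → Bool) where
  Edge := Bool × (Fin n → Bool)
  fintypeEdge := inferInstance
  decEqEdge := inferInstance
  inc := fun e => s(e.2, basGen n e.1 e.2)



lemma basA_cons_true (n : ℕ) (w : Fin n → Bool) :
    basA (n+1) (Fin.cons true w) = Fin.cons true w := by
  unfold basA; simp

lemma basA_cons_false (n : ℕ) (w : Fin n → Bool) :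
    basA (n+1) (Fin.cons false w) = Fin.cons false (basB n w) := by
  unfold basA; simp

lemma basB_cons_true (n : ℕ) (w : Fin n → Bool) :
    basB (n+1) (Fin.cons true w) = Fin.cons false w := by
  unfold basB; simp

lemma basB_cons_false (n : ℕ) (w : Fin n → Bool) :
    basB (n+1) (Fin.cons false w) = Fin.cons true (basA n w) := by
  unfold basB; simp

lemma exists_cons (n : ℕ) (v : Fin (n+1) → Bool) : ∃ b w, v = Fin.cons b w :=
  ⟨v 0, Fin.tail v, (Fin.cons_self_tail v).symm⟩

mutual
  /-- inverse of `basA` -/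
  def basAi : (n : ℕ) → (Fin n → Bool) → (Fin n → Bool)
    | 0, v => v
    | n + 1, v =>
      match v 0 with
      | true => v
      | false => Fin.cons false (basBi n (Fin.tail v))
  /-- inverse of `basB` -/
  def basBi : (n : ℕ) → (Fin n → Bool) → (Fin n → Bool)
    | 0, v => v
    | n + 1, v =>
      match v 0 with
      | false => Fin.cons true (Fin.tail v)
      | true => Fin.cons false (basAi n (Fin.tail v))
end

lemma basAi_cons_true (n : ℕ) (w : Fin n → Bool) :
    basAi (n+1) (Fin.cons true w) = Fin.cons true w := by
  unfold basAi; simp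

lemma basAi_cons_false (n : ℕ) (w : Fin n → Bool) :
    basAi (n+1) (Fin.cons false w) = Fin.cons false (basBi n w) := by
  unfold basAi; simp

lemma basBi_cons_true (n : ℕ) (w : Fin n → Bool) :
    basBi (n+1) (Fin.cons true w) = Fin.cons false (basAi n w) := by
  unfold basBi; simp

lemma basBi_cons_false (n : ℕ) (w : Fin n → Bool) :
    basBi (n+1) (Fin.cons false w) = Fin.cons true w := by
  unfold basBi; simp

lemma bas_inv (n : ℕ) :
    (∀ v, basAi n (basA n v) = v) ∧ (∀ v, basA n (basAi n v) = v) ∧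
    (∀ v, basBi n (basB n v) = v) ∧ (∀ v, basB n (basBi n v) = v) := by
  induction n with
  | zero => exact ⟨fun v => rfl, fun v => rfl, fun v => rfl, fun v => rfl⟩
  | succ n ih =>
    obtain ⟨ih1, ih2, ih3, ih4⟩ := ih
    refine ⟨?_, ?_, ?_, ?_⟩ <;> intro v <;>
      obtain ⟨b, w, rfl⟩ := exists_cons n v <;> cases b <;>
      simp [basA_cons_true, basA_cons_false, basB_cons_true, basB_cons_false,
        basAi_cons_true, basAi_cons_false, basBi_cons_true, basBi_cons_false,
        ih1, ih2, ih3, ih4]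

/-- `basA` as a permutation. -/
def basPermA (n : ℕ) : Equiv.Perm (Fin n → Bool) :=
  ⟨basA n, basAi n, fun v => (bas_inv n).1 v, fun v => (bas_inv n).2.1 v⟩

/-- `basB` as a permutation. -/
def basPermB (n : ℕ) : Equiv.Perm (Fin n → Bool) :=
  ⟨basB n, basBi n, fun v => (bas_inv n).2.2.1 v, fun v => (bas_inv n).2.2.2 v⟩

/-- The generators as permutations. -/
def basPerm (n : ℕ) : Bool → Equiv.Perm (Fin n → Bool)
  | true => basPermA n
  | false => basPermB n

@[simp] lemma basPerm_apply (n : ℕ) (s : Bool) (v : Fin n → Bool) :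
    basPerm n s v = basGen n s v := by cases s <;> rfl

@[simp] lemma basPermA_apply (n : ℕ) (v : Fin n → Bool) : basPermA n v = basA n v := rfl
@[simp] lemma basPermB_apply (n : ℕ) (v : Fin n → Bool) : basPermB n v = basB n v := rfl

lemma basPermA_pow_cons_false (n k : ℕ) (w : Fin n → Bool) :
    ((basPermA (n+1))^k) (Fin.cons false w) = Fin.cons false (((basPermB n)^k) w) := by
  induction k with
  | zero => simp
  | succ k ih =>
    rw [pow_succ', Equiv.Perm.mul_apply, ih, pow_succ', Equiv.Perm.mul_apply]
    simp [basA_cons_false]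

lemma basPermA_pow_cons_true (n k : ℕ) (w : Fin n → Bool) :
    ((basPermA (n+1))^k) (Fin.cons true w) = Fin.cons true w := by
  induction k with
  | zero => simp
  | succ k ih => rw [pow_succ', Equiv.Perm.mul_apply, ih]; simp [basA_cons_true]

lemma basPermB_pow_two_mul (n k : ℕ) (x : Bool) (u : Fin n → Bool) :
    ((basPermB (n+1))^(2*k)) (Fin.cons x u) = Fin.cons x (((basPermA n)^k) u) := by
  induction k generalizing u with
  | zero => simp
  | succ k ih =>
    have h2 : 2*(k+1) = (2*k) + 1 + 1 := by ring
    rw [h2, pow_succ, pow_succ, Equiv.Perm.mul_apply, Equiv.Perm.mul_apply]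
    have hb : (basPermB (n+1)) ((basPermB (n+1)) (Fin.cons x u)) = Fin.cons x (basA n u) := by
      cases x <;> simp [basB_cons_false, basB_cons_true]
    rw [hb, ih (basA n u)]
    simp [pow_succ, Equiv.Perm.mul_apply]

lemma basPermB_pow_odd_true (n k : ℕ) (u : Fin n → Bool) :
    ((basPermB (n+1))^(2*k+1)) (Fin.cons true u) = Fin.cons false (((basPermA n)^k) u) := by
  rw [pow_succ, Equiv.Perm.mul_apply]
  simp [basB_cons_true, basPermB_pow_two_mul]

lemma basPermB_pow_odd_false (n k : ℕ) (u : Fin n → Bool) :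
    ((basPermB (n+1))^(2*k+1)) (Fin.cons false u) = Fin.cons true (((basPermA n)^(k+1)) u) := by
  rw [pow_succ, Equiv.Perm.mul_apply]
  simp only [basPermB_apply, basB_cons_false]
  rw [basPermB_pow_two_mul]
  simp [pow_succ, Equiv.Perm.mul_apply]

lemma sameCycle_of_pow {α : Type*} [Finite α] (f : Equiv.Perm α) {x y : α} (k : ℕ)
    (h : (f^k) x = y) : f.SameCycle x y := ⟨(k : ℤ), by rw [zpow_natCast]; exact h⟩

/-- Cross-level same-cycle lemma for `a`, `00`-branch. -/
lemma sameCycleA_cons_false (n : ℕ) (v w : Fin n → Bool) :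
    (basPermA (n+1)).SameCycle (Fin.cons false v) (Fin.cons false w) ↔
      (basPermB n).SameCycle v w := by
  constructor
  · intro h
    obtain ⟨i, -, hi⟩ := h.exists_pow_eq'
    rw [basPermA_pow_cons_false] at hi
    exact sameCycle_of_pow _ i (Fin.cons_right_injective _ hi)
  · intro h
    obtain ⟨i, -, hi⟩ := h.exists_pow_eq'
    exact sameCycle_of_pow _ i (by rw [basPermA_pow_cons_false, hi])

lemma sameCycleA_cons_true (n : ℕ) (v : Fin n → Bool) (z : Fin (n+1) → Bool) :
    (basPermA (n+1)).SameCycle (Fin.cons true v) z ↔ z = Fin.cons true v := by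
  constructor
  · intro h
    obtain ⟨i, -, hi⟩ := h.exists_pow_eq'
    rw [basPermA_pow_cons_true] at hi
    exact hi.symm
  · rintro rfl; exact Equiv.Perm.SameCycle.refl _ _

lemma not_sameCycleA_mixed (n : ℕ) (v w : Fin n → Bool) :
    ¬ (basPermA (n+1)).SameCycle (Fin.cons false v) (Fin.cons true w) := by
  intro h
  obtain ⟨i, -, hi⟩ := h.exists_pow_eq'
  rw [basPermA_pow_cons_false] at hi
  exact Bool.false_ne_true (congrArg (fun q => q 0) hi : false = true)

/-- Cross-level same-cycle lemma for `b`. -/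
lemma sameCycleB_cons (n : ℕ) (x y : Bool) (u w : Fin n → Bool) :
    (basPermB (n+1)).SameCycle (Fin.cons x u) (Fin.cons y w) ↔
      (basPermA n).SameCycle u w := by
  constructor
  · intro h
    obtain ⟨i, -, hi⟩ := h.exists_pow_eq'
    rcases Nat.even_or_odd i with ⟨q, hq⟩ | ⟨q, hq⟩
    · subst hq
      rw [show q + q = 2*q by ring, basPermB_pow_two_mul] at hi
      exact sameCycle_of_pow _ q ((Fin.cons_inj.mp hi).2)
    · subst hq
      cases x
      · rw [basPermB_pow_odd_false] at hi
        exact sameCycle_of_pow _ (q+1) ((Fin.cons_inj.mp hi).2)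
      · rw [basPermB_pow_odd_true] at hi
        exact sameCycle_of_pow _ q ((Fin.cons_inj.mp hi).2)
  · intro h
    by_cases hxy : x = y
    · subst hxy
      obtain ⟨q, -, hq⟩ := h.exists_pow_eq'
      exact sameCycle_of_pow _ (2*q) (by rw [basPermB_pow_two_mul, hq])
    · obtain ⟨q, -, hq⟩ := h.exists_pow_eq'
      cases x <;> cases y
      · exact absurd rfl hxy
      · have h' := (Equiv.Perm.sameCycle_apply_left (f := basPermA n)).mpr h
        obtain ⟨q', -, hq'⟩ := h'.exists_pow_eq'
        refine sameCycle_of_pow _ (2*q'+1) ?_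
        rw [basPermB_pow_odd_false, pow_succ, Equiv.Perm.mul_apply]
        rw [hq']
      · refine sameCycle_of_pow _ (2*q+1) ?_
        rw [basPermB_pow_odd_true, hq]
      · exact absurd rfl hxy

set_option linter.unusedSectionVars false

namespace Multigraph

open SimpleGraph

variable {V : Type} [Fintype V] [DecidableEq V] (G : Multigraph V)

lemma toSimple_adj {A : Finset G.Edge} {u v : V} :
    (G.toSimple A).Adj u v ↔ u ≠ v ∧ ∃ e ∈ A, G.inc e = s(u, v) := by
  constructor
  · rintro ⟨hne, ⟨e, he, hinc⟩ | ⟨e, he, hinc⟩⟩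
    · exact ⟨hne, e, he, hinc⟩
    · exact ⟨hne, e, he, by rw [hinc, Sym2.eq_swap]⟩
  · rintro ⟨hne, e, he, hinc⟩
    exact ⟨hne, Or.inl ⟨e, he, hinc⟩⟩

lemma toSimple_mono {A B : Finset G.Edge} (h : A ⊆ B) : G.toSimple A ≤ G.toSimple B := by
  intro u v huv
  rcases (G.toSimple_adj).mp huv with ⟨hne, e, he, hinc⟩
  exact (G.toSimple_adj).mpr ⟨hne, e, h he, hinc⟩

lemma toSimple_eq_of_nondiag {A B : Finset G.Edge}
    (h : ∀ e, ¬ (G.inc e).IsDiag → (e ∈ A ↔ e ∈ B)) : G.toSimple A = G.toSimple B := by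
  ext u v
  rw [G.toSimple_adj, G.toSimple_adj]
  constructor
  · rintro ⟨hne, e, he, hinc⟩
    exact ⟨hne, e, (h e (by rw [hinc]; exact fun hd => hne (Sym2.mk_isDiag_iff.mp hd))).mp he, hinc⟩
  · rintro ⟨hne, e, he, hinc⟩
    exact ⟨hne, e, (h e (by rw [hinc]; exact fun hd => hne (Sym2.mk_isDiag_iff.mp hd))).mpr he, hinc⟩

lemma reachable_insert_cases {A : Finset G.Edge} {e : G.Edge} {x y u v : V}
    (hinc : G.inc e = s(x, y)) (h : (G.toSimple (insert e A)).Reachable u v) :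
    (G.toSimple A).Reachable u v ∨
    ((G.toSimple A).Reachable u x ∧ (G.toSimple A).Reachable y v) ∨
    ((G.toSimple A).Reachable u y ∧ (G.toSimple A).Reachable x v) := by
  obtain ⟨p⟩ := h
  induction p with
  | nil => exact Or.inl (Reachable.refl _)
  | @cons a b c hab p ih =>
    rcases (G.toSimple_adj).mp hab with ⟨hne, e', he', hinc'⟩
    rcases Finset.mem_insert.mp he' with rfl | he'A
    · rw [hinc] at hinc'
      rcases Sym2.eq_iff.mp hinc' with ⟨rfl, rfl⟩ | ⟨rfl, rfl⟩
      · -- a = x, b = y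
        rcases ih with h1 | ⟨h1, h2⟩ | ⟨h1, h2⟩
        · exact Or.inr (Or.inl ⟨Reachable.refl _, h1⟩)
        · exact Or.inl (h1.symm.trans h2)
        · exact Or.inl h2
      · -- a = y, b = x
        rcases ih with h1 | ⟨h1, h2⟩ | ⟨h1, h2⟩
        · exact Or.inr (Or.inr ⟨Reachable.refl _, h1⟩)
        · exact Or.inl h2
        · exact Or.inl (h1.symm.trans h2)
    · have hadj : (G.toSimple A).Adj a b := (G.toSimple_adj).mpr ⟨hne, e', he'A, hinc'⟩
      rcases ih with h1 | ⟨h1, h2⟩ | ⟨h1, h2⟩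
      · exact Or.inl (hadj.reachable.trans h1)
      · exact Or.inr (Or.inl ⟨hadj.reachable.trans h1, h2⟩)
      · exact Or.inr (Or.inr ⟨hadj.reachable.trans h1, h2⟩)

lemma preconnected_erase {A : Finset G.Edge} {e : G.Edge} {x y : V} (he : e ∈ A)
    (hinc : G.inc e = s(x, y))
    (hxy : (G.toSimple (A.erase e)).Reachable x y)
    (h : (G.toSimple A).Preconnected) : (G.toSimple (A.erase e)).Preconnected := by
  intro u v
  have h' : (G.toSimple (insert e (A.erase e))).Reachable u v := by
    rw [Finset.insert_erase he]; exact h u v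
  rcases G.reachable_insert_cases hinc h' with h1 | ⟨h1, h2⟩ | ⟨h1, h2⟩
  · exact h1
  · exact h1.trans (hxy.trans h2)
  · exact h1.trans (hxy.symm.trans h2)

lemma comps_le_comps_insert_add_one (A : Finset G.Edge) (e : G.Edge) :
    G.comps A ≤ G.comps (insert e A) + 1 := by
  classical
  obtain ⟨x, y, hinc⟩ : ∃ x y, G.inc e = s(x, y) :=
    Sym2.exists.mp ⟨G.inc e, rfl⟩
  have hle : G.toSimple A ≤ G.toSimple (insert e A) :=
    G.toSimple_mono (Finset.subset_insert e A)
  set π : (G.toSimple A).ConnectedComponent → (G.toSimple (insert e A)).ConnectedComponent :=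
    ConnectedComponent.map (Hom.ofLE hle) with hπ
  have hmk : ∀ u : V, π ((G.toSimple A).connectedComponentMk u)
      = (G.toSimple (insert e A)).connectedComponentMk u := fun u => rfl
  have claim : ∀ c d, π c = π d →
      c = d ∨ c = (G.toSimple A).connectedComponentMk x ∨
        d = (G.toSimple A).connectedComponentMk x := by
    refine ConnectedComponent.ind₂ ?_
    intro u v hpi
    rw [hmk, hmk, ConnectedComponent.eq] at hpi
    rcases G.reachable_insert_cases hinc hpi with h1 | ⟨h1, h2⟩ | ⟨h1, h2⟩
    · exact Or.inl (ConnectedComponent.sound h1)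
    · exact Or.inr (Or.inl (ConnectedComponent.sound h1))
    · -- u reach y, x reach v : then d = mk v = mk x
      exact Or.inr (Or.inr (ConnectedComponent.sound h2.symm))
  set F : (G.toSimple A).ConnectedComponent →
      Option (G.toSimple (insert e A)).ConnectedComponent :=
    fun c => if c = (G.toSimple A).connectedComponentMk x then none else some (π c) with hF
  have hFinj : Function.Injective F := by
    intro c d hcd
    by_cases hc : c = (G.toSimple A).connectedComponentMk x
    · by_cases hd : d = (G.toSimple A).connectedComponentMk x
      · exact hc.trans hd.symm
      · simp [hF, hc, hd] at hcd
    · by_cases hd : d = (G.toSimple A).connectedComponentMk x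
      · simp [hF, hc, hd] at hcd
      · simp only [hF, if_neg hc, if_neg hd, Option.some.injEq] at hcd
        rcases claim c d hcd with h | h | h
        · exact h
        · exact absurd h hc
        · exact absurd h hd
  calc G.comps A ≤ Nat.card (Option (G.toSimple (insert e A)).ConnectedComponent) :=
        Nat.card_le_card_of_injective F hFinj
    _ = G.comps (insert e A) + 1 := Finite.card_option

lemma comps_empty : G.comps (∅ : Finset G.Edge) = Fintype.card V := by
  have hbot : G.toSimple (∅ : Finset G.Edge) = ⊥ := by
    ext u v
    rw [G.toSimple_adj]
    simp
  unfold comps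
  rw [hbot]
  have : Function.Bijective ((⊥ : SimpleGraph V).connectedComponentMk) := by
    constructor
    · intro u v huv
      exact (SimpleGraph.reachable_bot).mp (ConnectedComponent.exact huv)
    · exact ConnectedComponent.ind (fun v => ⟨v, rfl⟩)
  rw [← Nat.card_eq_fintype_card]
  exact (Nat.card_eq_of_bijective _ this).symm

lemma card_le_comps_add_card (A : Finset G.Edge) :
    Fintype.card V ≤ G.comps A + A.card := by
  classical
  induction A using Finset.induction_on with
  | empty => simp [G.comps_empty]
  | @insert e A he ih =>
    rw [Finset.card_insert_of_notMem he]
    calc Fintype.card V ≤ G.comps A + A.card := ih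
      _ ≤ (G.comps (insert e A) + 1) + A.card := by
          exact Nat.add_le_add_right (G.comps_le_comps_insert_add_one A e) _
      _ = G.comps (insert e A) + (A.card + 1) := by ring

lemma comps_eq_one_iff [Nonempty V] {A : Finset G.Edge} :
    G.comps A = 1 ↔ (G.toSimple A).Preconnected := by
  unfold comps
  rw [Nat.card_eq_one_iff_unique]
  constructor
  · rintro ⟨hs, -⟩ u v
    exact ConnectedComponent.exact (Subsingleton.elim _ _)
  · intro h
    refine ⟨⟨ConnectedComponent.ind₂ fun u v => ConnectedComponent.sound (h u v)⟩,
      ⟨(G.toSimple A).connectedComponentMk Classical.ofNonempty⟩⟩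

end Multigraph

open scoped Classical

/-- non-loop edges -/
def bnl (n : ℕ) (e : (basilica n).Edge) : Prop := basGen n e.1 e.2 ≠ e.2

/-- same-cycle relation on edges -/
def brel (n : ℕ) (e f : (basilica n).Edge) : Prop :=
  e.1 = f.1 ∧ (basPerm n e.1).SameCycle e.2 f.2

lemma brel_refl (n : ℕ) (e : (basilica n).Edge) : brel n e e :=
  ⟨rfl, Equiv.Perm.SameCycle.refl _ _⟩

lemma brel_symm (n : ℕ) {e f : (basilica n).Edge} (h : brel n e f) : brel n f e := by
  obtain ⟨h1, h2⟩ := h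
  refine ⟨h1.symm, ?_⟩
  rw [← h1] at *
  exact h2.symm

lemma brel_trans (n : ℕ) {e f g : (basilica n).Edge} (h : brel n e f) (h' : brel n f g) :
    brel n e g := by
  obtain ⟨h1, h2⟩ := h
  obtain ⟨h1', h2'⟩ := h'
  refine ⟨h1.trans h1', ?_⟩
  rw [← h1] at h2'
  exact h2.trans h2'

lemma bnl_of_brel (n : ℕ) {e f : (basilica n).Edge} (h : brel n e f) (he : bnl n e) :
    bnl n f := by
  obtain ⟨h1, h2⟩ := h
  have := h2.apply_eq_self_iff
  unfold bnl at he ⊢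
  rw [← h1]
  simp only [← basPerm_apply] at he ⊢
  exact fun hf => he (this.mpr hf)

lemma basB_succ_ne (n : ℕ) (v : Fin (n+1) → Bool) : basB (n+1) v ≠ v := by
  obtain ⟨b, w, rfl⟩ := exists_cons n v
  cases b <;> simp [basB_cons_true, basB_cons_false, Fin.cons_inj]

lemma basA_one_eq (v : Fin 1 → Bool) : basA 1 v = v := by
  obtain ⟨b, w, rfl⟩ := exists_cons 0 v
  cases b <;> simp [basA_cons_true, basA_cons_false]
  show basB 0 w = w
  rfl

/-- Going around the cycle: if all other edges of the cycle of `e = (s,v)` are in `A`,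
then the endpoints of `e` are connected in `A`. -/
lemma reach_cycle (n : ℕ) (s : Bool) (v : Fin n → Bool) (A : Finset (basilica n).Edge)
    (hnl : basGen n s v ≠ v)
    (hsub : ∀ w, (basPerm n s).SameCycle v w → w ≠ v → ((s, w) : (basilica n).Edge) ∈ A) :
    ((basilica n).toSimple A).Reachable v (basGen n s v) := by
  set f := basPerm n s with hf
  have hfv : ∀ w, f w = basGen n s w := fun w => basPerm_apply n s w
  have hper : v ∈ Function.periodicPts ⇑f := by
    refine ⟨orderOf f, orderOf_pos f, ?_⟩
    show (⇑f)^[orderOf f] v = v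
    rw [Equiv.Perm.iterate_eq_pow, pow_orderOf_eq_one]
    rfl
  set k := Function.minimalPeriod ⇑f v with hk
  have hk0 : 0 < k := Function.minimalPeriod_pos_of_mem_periodicPts hper
  have hk1 : k ≠ 1 := by
    intro h
    exact hnl (by rw [← hfv]; exact Function.minimalPeriod_eq_one_iff_isFixedPt.mp h)
  have hk2 : 2 ≤ k := by omega
  have hiter_ne : ∀ j, 0 < j → j < k → (⇑f)^[j] v ≠ v := by
    intro j hj0 hjk h
    have : Function.IsPeriodicPt ⇑f j v := h
    have := this.eq_zero_of_lt_minimalPeriod hjk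
    omega
  have hsc : ∀ j : ℕ, f.SameCycle v ((⇑f)^[j] v) := by
    intro j
    exact ⟨(j : ℤ), by rw [zpow_natCast]; rfl⟩
  have hnlj : ∀ j : ℕ, f ((⇑f)^[j] v) ≠ (⇑f)^[j] v := by
    intro j h
    have h2 : f v = v := ((hsc j).apply_eq_self_iff).mpr h
    rw [hfv] at h2
    exact hnl h2
  have aux : ∀ m, m + 1 ≤ k → ((basilica n).toSimple A).Reachable ((⇑f)^[k - m] v) v := by
    intro m
    induction m with
    | zero =>
      intro _
      rw [Nat.sub_zero, Function.iterate_minimalPeriod]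
    | succ m ih =>
      intro hm
      set j := k - (m + 1) with hj
      have hj0 : 0 < j := by omega
      have hjk : j < k := by omega
      have hjs : j + 1 = k - m := by omega
      have hmem : ((s, (⇑f)^[j] v) : (basilica n).Edge) ∈ A :=
        hsub _ (hsc j) (hiter_ne j hj0 hjk)
      have hadj : ((basilica n).toSimple A).Adj ((⇑f)^[j] v) ((⇑f)^[j+1] v) := by
        refine ((basilica n).toSimple_adj).mpr ⟨?_, (s, (⇑f)^[j] v), hmem, ?_⟩
        · intro h
          rw [Function.iterate_succ_apply'] at h
          exact hnlj j h.symm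
        · show s((⇑f)^[j] v, basGen n s ((⇑f)^[j] v)) = _
          rw [← hfv ((⇑f)^[j] v)]
          rw [← Function.iterate_succ_apply' ⇑f j v]
      have := ih (by omega)
      rw [← hjs] at this
      exact hadj.reachable.trans this
  have h1 := aux (k - 1) (by omega)
  have : k - (k - 1) = 1 := by omega
  rw [this] at h1
  have h2 : (⇑f)^[1] v = basGen n s v := by simp [hfv]
  rw [h2] at h1
  exact h1.symm

lemma basilica_reach_gen (n : ℕ) (s : Bool) (u : Fin n → Bool) :
    ((basilica n).toSimple Finset.univ).Reachable u (basGen n s u) := by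
  by_cases h : basGen n s u = u
  · rw [h]
  · exact (((basilica n).toSimple_adj).mpr
      ⟨fun hh => h hh.symm, (s, u), Finset.mem_univ _, rfl⟩).reachable

lemma basilica_preconnected : ∀ n, ((basilica n).toSimple Finset.univ).Preconnected := by
  intro n
  induction n with
  | zero =>
    intro u v
    have huv : u = v := funext fun i => i.elim0
    rw [huv]
  | succ n ih =>
    have step : ∀ (x : Fin n → Bool) (s : Bool),
        ((basilica (n+1)).toSimple Finset.univ).Reachable (Fin.cons false x)
          (Fin.cons false (basGen n s x)) := by
      intro x s
      cases s
      · -- b-step at level n, via the a-edge at level n+1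
        have h := basilica_reach_gen (n+1) true (Fin.cons false x)
        have he : basGen (n+1) true (Fin.cons false x) = Fin.cons false (basB n x) := by
          show basA (n+1) (Fin.cons false x) = _
          rw [basA_cons_false]
        rw [he] at h
        exact h
      · -- a-step at level n, via two b-edges at level n+1
        have h1 := basilica_reach_gen (n+1) false (Fin.cons false x)
        have he1 : basGen (n+1) false (Fin.cons false x) = Fin.cons true (basA n x) := by
          show basB (n+1) (Fin.cons false x) = _
          rw [basB_cons_false]
        rw [he1] at h1
        have h2 := basilica_reach_gen (n+1) false (Fin.cons true (basA n x))
        have he2 : basGen (n+1) false (Fin.cons true (basA n x)) = Fin.cons false (basA n x) := by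
          show basB (n+1) (Fin.cons true (basA n x)) = _
          rw [basB_cons_true]
        rw [he2] at h2
        exact h1.trans h2
    have lift : ∀ v w : Fin n → Bool,
        ((basilica n).toSimple Finset.univ).Reachable v w →
        ((basilica (n+1)).toSimple Finset.univ).Reachable (Fin.cons false v)
          (Fin.cons false w) := by
      intro v w h
      obtain ⟨p⟩ := h
      induction p with
      | nil => exact SimpleGraph.Reachable.refl _
      | @cons a b c hab p ihp =>
        refine SimpleGraph.Reachable.trans ?_ ihp
        obtain ⟨hne, e, -, hinc⟩ := ((basilica n).toSimple_adj).mp hab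
        have hinc' : s(e.2, basGen n e.1 e.2) = s(a, b) := hinc
        rcases Sym2.eq_iff.mp hinc' with ⟨h1, h2⟩ | ⟨h1, h2⟩
        · rw [← h1, ← h2]
          exact step e.2 e.1
        · rw [← h1, ← h2]
          exact (step e.2 e.1).symm
    have tofalse : ∀ z : Fin (n+1) → Bool, ∃ w,
        ((basilica (n+1)).toSimple Finset.univ).Reachable z (Fin.cons false w) := by
      intro z
      obtain ⟨b, w, rfl⟩ := exists_cons n z
      cases b
      · exact ⟨w, SimpleGraph.Reachable.refl _⟩
      · refine ⟨basAi n w, ?_⟩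
        have h := basilica_reach_gen (n+1) false (Fin.cons false (basAi n w))
        have he : basGen (n+1) false (Fin.cons false (basAi n w)) = Fin.cons true w := by
          show basB (n+1) (Fin.cons false (basAi n w)) = _
          rw [basB_cons_false, (bas_inv n).2.1]
        rw [he] at h
        exact h.symm
    intro z₁ z₂
    obtain ⟨w₁, h₁⟩ := tofalse z₁
    obtain ⟨w₂, h₂⟩ := tofalse z₂
    exact h₁.trans ((lift w₁ w₂ (ih w₁ w₂)).trans h₂.symm)

/-- The non-loop edges of the level-`n` basilica graph. -/
noncomputable def nlE (n : ℕ) : Finset (basilica n).Edge := Finset.univ.filter (bnl n)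

lemma mem_nlE {n : ℕ} {e : (basilica n).Edge} : e ∈ nlE n ↔ bnl n e := by
  simp [nlE]

lemma bnl_iff_nondiag {n : ℕ} {e : (basilica n).Edge} :
    bnl n e ↔ ¬ ((basilica n).inc e).IsDiag := by
  show _ ↔ ¬ (s(e.2, basGen n e.1 e.2)).IsDiag
  rw [Sym2.mk_isDiag_iff]
  exact ⟨fun h h' => h h'.symm, fun h h' => h h'.symm⟩

lemma toSimple_nlE (n : ℕ) :
    (basilica n).toSimple (nlE n) = (basilica n).toSimple Finset.univ :=
  (basilica n).toSimple_eq_of_nondiag fun e hnd => by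
    simp [mem_nlE, bnl_iff_nondiag, hnd]

/-- The type of transversals of the nontrivial cycles. -/
def BTrans (n : ℕ) : Type :=
  {D : Finset (basilica n).Edge //
    (∀ e ∈ D, bnl n e) ∧ ∀ e, bnl n e → ∃! d, d ∈ D ∧ brel n e d}

lemma preconnected_sdiff (n : ℕ) (D : Finset (basilica n).Edge)
    (hD1 : ∀ e ∈ D, bnl n e)
    (hD2 : ∀ e f, e ∈ D → f ∈ D → brel n e f → e = f) :
    ((basilica n).toSimple (nlE n \ D)).Preconnected := by
  classical
  induction D using Finset.induction_on with
  | empty =>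
    rw [Finset.sdiff_empty, toSimple_nlE]
    exact basilica_preconnected n
  | @insert e D he ihD =>
    have hbnl : bnl n e := hD1 e (Finset.mem_insert_self e D)
    have hsd : nlE n \ insert e D = (nlE n \ D).erase e := by
      ext f
      simp only [Finset.mem_sdiff, Finset.mem_insert, Finset.mem_erase]
      tauto
    rw [hsd]
    have heA : e ∈ nlE n \ D := by
      rw [Finset.mem_sdiff, mem_nlE]
      exact ⟨hbnl, he⟩
    have hreach : (((basilica n)).toSimple ((nlE n \ D).erase e)).Reachable e.2
        (basGen n e.1 e.2) := by
      apply reach_cycle n e.1 e.2 _ hbnl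
      intro w hsc hwv
      have hbrel : brel n e (e.1, w) := ⟨rfl, hsc⟩
      erw [Finset.mem_erase, Finset.mem_sdiff, mem_nlE]
      refine ⟨?_, bnl_of_brel n hbrel hbnl, ?_⟩
      · intro hq
        exact hwv (congrArg Prod.snd hq)
      · intro hmem
        have := hD2 e (e.1, w) (Finset.mem_insert_self e D)
          (Finset.mem_insert_of_mem hmem) hbrel
        rw [← this] at hmem
        exact he hmem
    refine (basilica n).preconnected_erase heA rfl hreach ?_
    exact ihD (fun f hf => hD1 f (Finset.mem_insert_of_mem hf))
      (fun f g hf hg => hD2 f g (Finset.mem_insert_of_mem hf) (Finset.mem_insert_of_mem hg))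

lemma card_V (n : ℕ) : Fintype.card (Fin n → Bool) = 2 ^ n := by
  simp [Fintype.card_fun]

/-- The key characterization: spanning trees are exactly complements of transversals. -/
theorem treeCount_eq_card_trans (n : ℕ) (hne : Nonempty (BTrans n))
    (hcard : ∀ D : BTrans n, D.1.card + (2 ^ n - 1) = (nlE n).card) :
    (basilica n).treeCount = Nat.card (BTrans n) := by
  classical
  have hV : Fintype.card (Fin n → Bool) = 2 ^ n := card_V n
  have hpow : 1 ≤ 2 ^ n := Nat.one_le_two_pow
  -- the map from transversals to trees
  have hwell : ∀ D : BTrans n, (basilica n).comps (nlE n \ D.1) = 1 ∧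
      (nlE n \ D.1).card + 1 = Fintype.card (Fin n → Bool) := by
    intro D
    obtain ⟨Dset, hD1, hD2⟩ := D
    have hsub : Dset ⊆ nlE n := fun e heD => mem_nlE.mpr (hD1 e heD)
    constructor
    · rw [(basilica n).comps_eq_one_iff]
      refine preconnected_sdiff n Dset hD1 ?_
      intro e f hf hg hrel
      have hbnl : bnl n e := hD1 e hf
      obtain ⟨d, -, hun⟩ := hD2 e hbnl
      have h1 : e = d := hun e ⟨hf, brel_refl n e⟩
      have h2 : f = d := hun f ⟨hg, hrel⟩
      rw [h1, h2]
    · rw [Finset.card_sdiff_of_subset hsub, hV]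
      have := hcard ⟨Dset, hD1, hD2⟩
      have hle : Dset.card ≤ (nlE n).card := Finset.card_le_card hsub
      simp only at this
      omega
  set Φ : BTrans n → {A : Finset (basilica n).Edge //
      (basilica n).comps A = 1 ∧ A.card + 1 = Fintype.card (Fin n → Bool)} :=
    fun D => ⟨nlE n \ D.1, hwell D⟩ with hΦ
  have hinj : Function.Injective Φ := by
    intro D D' h
    have h' : nlE n \ D.1 = nlE n \ D'.1 := congrArg Subtype.val h
    have hsub : D.1 ⊆ nlE n := fun e heD => mem_nlE.mpr (D.2.1 e heD)
    have hsub' : D'.1 ⊆ nlE n := fun e heD => mem_nlE.mpr (D'.2.1 e heD)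
    have : D.1 = D'.1 := by
      rw [← Finset.sdiff_sdiff_eq_self hsub, ← Finset.sdiff_sdiff_eq_self hsub', h']
    exact Subtype.ext this
  have hsurj : Function.Surjective Φ := by
    rintro ⟨A, hA1, hA2⟩
    -- A contains no loops
    have hAsub : A ⊆ nlE n := by
      intro e heA
      rw [mem_nlE]
      by_contra hloop
      have hdiag : ((basilica n).inc e).IsDiag := by
        by_contra h
        exact hloop (bnl_iff_nondiag.mpr h)
      have hts : (basilica n).toSimple (A.erase e) = (basilica n).toSimple A := by
        apply (basilica n).toSimple_eq_of_nondiag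
        intro f hnd
        have hfe : f ≠ e := fun h => hnd (h ▸ hdiag)
        simp [Finset.mem_erase, hfe]
      have hcomps : (basilica n).comps (A.erase e) = 1 := by
        unfold Multigraph.comps
        rw [hts]
        exact hA1
      have := (basilica n).card_le_comps_add_card (A.erase e)
      rw [hcomps, Finset.card_erase_of_mem heA, hV] at this
      rw [hV] at hA2
      have hA1' : 1 ≤ A.card := Finset.card_pos.mpr ⟨e, heA⟩
      omega
    -- every cycle misses at least one edge of A
    have hmiss : ∀ e, bnl n e → ∃ d, d ∈ nlE n \ A ∧ brel n e d := by
      intro e hbnl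
      by_contra hcon
      push_neg at hcon
      have hclass : ∀ w, (basPerm n e.1).SameCycle e.2 w →
          ((e.1, w) : (basilica n).Edge) ∈ A := by
        intro w hsc
        have hrel : brel n e (e.1, w) := ⟨rfl, hsc⟩
        have hb : bnl n (e.1, w) := bnl_of_brel n hrel hbnl
        have := hcon (e.1, w)
        erw [Finset.mem_sdiff, mem_nlE] at this
        by_contra hnA
        exact (this ⟨hb, hnA⟩) hrel
      have heA : e ∈ A := by
        have := hclass e.2 (Equiv.Perm.SameCycle.refl _ _)
        rcases e with ⟨s, v⟩
        exact this
      have hreach : (((basilica n)).toSimple (A.erase e)).Reachable e.2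
          (basGen n e.1 e.2) := by
        apply reach_cycle n e.1 e.2 _ hbnl
        intro w hsc hwv
        erw [Finset.mem_erase]
        refine ⟨fun hq => hwv (congrArg Prod.snd hq), hclass w hsc⟩
      have hpre : ((basilica n).toSimple (A.erase e)).Preconnected := by
        refine (basilica n).preconnected_erase heA rfl hreach ?_
        exact ((basilica n).comps_eq_one_iff).mp hA1
      have hcomps : (basilica n).comps (A.erase e) = 1 :=
        ((basilica n).comps_eq_one_iff).mpr hpre
      have := (basilica n).card_le_comps_add_card (A.erase e)
      rw [hcomps, Finset.card_erase_of_mem heA, hV] at this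
      have h2n : 2 ≤ 2 ^ n := by
        by_contra h2
        -- then 2^n = 1, so card A = 0, but e ∈ A
        have : (2:ℕ) ^ n = 1 := by omega
        have hA0 : A.card = 0 := by omega
        rw [Finset.card_eq_zero] at hA0
        rw [hA0] at heA
        exact absurd heA (Finset.notMem_empty e)
      omega
    -- uniqueness via a reference transversal
    obtain ⟨D₀⟩ := hne
    set Dset := nlE n \ A with hDset
    have hDsub : ∀ e ∈ Dset, bnl n e := fun e hd =>
      mem_nlE.mp (Finset.mem_sdiff.mp hd).1
    -- the choice map D₀ → Dset
    have hGex : ∀ d : {d // d ∈ D₀.1}, ∃ d' : {d' // d' ∈ Dset}, brel n d.1 d'.1 := by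
      rintro ⟨d, hd⟩
      obtain ⟨d', hd', hrel⟩ := hmiss d (D₀.2.1 d hd)
      exact ⟨⟨d', hd'⟩, hrel⟩
    choose G hG using hGex
    have hGinj : Function.Injective G := by
      rintro d₁ d₂ h
      have h1 := hG d₁
      have h2 := hG d₂
      rw [h] at h1
      -- brel d₁ (G d₂) and brel d₂ (G d₂) : so brel d₁ d₂
      have hrel : brel n d₁.1 d₂.1 := brel_trans n h1 (brel_symm n h2)
      obtain ⟨c, -, hun⟩ := D₀.2.2 d₁.1 (D₀.2.1 d₁.1 d₁.2)
      have e1 : d₁.1 = c := hun d₁.1 ⟨d₁.2, brel_refl n d₁.1⟩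
      have e2 : d₂.1 = c := hun d₂.1 ⟨d₂.2, hrel⟩
      exact Subtype.ext (e1.trans e2.symm)
    have hcards : Fintype.card {d // d ∈ D₀.1} = Fintype.card {d' // d' ∈ Dset} := by
      rw [Fintype.card_coe, Fintype.card_coe]
      have h1 := hcard D₀
      have hsub : Dset ⊆ nlE n := Finset.sdiff_subset
      have h2 : Dset.card = (nlE n).card - A.card := by
        rw [hDset, Finset.card_sdiff_of_subset hAsub]
      have hle : A.card ≤ (nlE n).card := Finset.card_le_card hAsub
      rw [hV] at hA2
      omega
    have hGsurj : Function.Surjective G :=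
      ((Fintype.bijective_iff_injective_and_card G).mpr ⟨hGinj, hcards⟩).2
    -- Dset is a transversal
    have hDtrans : ∀ e, bnl n e → ∃! d, d ∈ Dset ∧ brel n e d := by
      intro e hbnl
      obtain ⟨d, hd, hrel⟩ := hmiss e hbnl
      refine ⟨d, ⟨hd, hrel⟩, ?_⟩
      rintro d' ⟨hd', hrel'⟩
      obtain ⟨c, hcmem, hun⟩ := D₀.2.2 e hbnl
      obtain ⟨c₁, hc₁⟩ := hGsurj ⟨d', hd'⟩
      obtain ⟨c₂, hc₂⟩ := hGsurj ⟨d, hd⟩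
      have hb₁ : brel n c₁.1 d' := by have h := hG c₁; rw [hc₁] at h; exact h
      have hb₂ : brel n c₂.1 d := by have h := hG c₂; rw [hc₂] at h; exact h
      have e₁ : c₁.1 = c := hun c₁.1 ⟨c₁.2, brel_trans n hrel' (brel_symm n hb₁)⟩
      have e₂ : c₂.1 = c := hun c₂.1 ⟨c₂.2, brel_trans n hrel (brel_symm n hb₂)⟩
      have : c₁ = c₂ := Subtype.ext (e₁.trans e₂.symm)
      rw [this, hc₂] at hc₁
      exact (congrArg Subtype.val hc₁).symm
    refine ⟨⟨Dset, hDsub, hDtrans⟩, ?_⟩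
    apply Subtype.ext
    show nlE n \ Dset = A
    rw [hDset, Finset.sdiff_sdiff_eq_self hAsub]
  exact (Nat.card_eq_of_bijective Φ ⟨hinj, hsurj⟩).symm

/-- functions invariant under `basA` -/
def InvA (n : ℕ) : Type := {h : (Fin n → Bool) → Bool // ∀ v, h (basA n v) = h v}
/-- functions invariant under `basB` -/
def InvB (n : ℕ) : Type := {h : (Fin n → Bool) → Bool // ∀ v, h (basB n v) = h v}

/-- pair (number of `a`-orbit log-counts): `icp n = (icn n, icbn n)` -/
def icp : ℕ → ℕ × ℕ
  | 0 => (1, 1)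
  | n+1 => (2^n + (icp n).2, (icp n).1)

def icn (n : ℕ) : ℕ := (icp n).1
def icbn (n : ℕ) : ℕ := (icp n).2

lemma icn_zero : icn 0 = 1 := rfl
lemma icbn_zero : icbn 0 = 1 := rfl
lemma icn_succ (n : ℕ) : icn (n+1) = 2^n + icbn n := rfl
lemma icbn_succ (n : ℕ) : icbn (n+1) = icn n := rfl

def invAEquiv (n : ℕ) : InvA (n+1) ≃ ((Fin n → Bool) → Bool) × InvB n where
  toFun h := ⟨fun w => h.1 (Fin.cons true w),
    ⟨fun w => h.1 (Fin.cons false w), by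
      intro w
      have := h.2 (Fin.cons false w)
      rwa [basA_cons_false] at this⟩⟩
  invFun p := ⟨fun v => cond (v 0) (p.1 (Fin.tail v)) (p.2.1 (Fin.tail v)), by
    intro v
    obtain ⟨b, w, rfl⟩ := exists_cons n v
    cases b
    · rw [basA_cons_false]
      simp [p.2.2 w]
    · rw [basA_cons_true]⟩
  left_inv h := by
    apply Subtype.ext
    funext v
    obtain ⟨b, w, rfl⟩ := exists_cons n v
    cases b <;> simp
  right_inv p := by
    refine Prod.ext ?_ (Subtype.ext ?_) <;> funext w <;> simp

def invBEquiv (n : ℕ) : InvB (n+1) ≃ InvA n where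
  toFun h := ⟨fun w => h.1 (Fin.cons false w), by
    intro w
    show h.1 (Fin.cons false (basA n w)) = h.1 (Fin.cons false w)
    have h1 := h.2 (Fin.cons false w)
    rw [basB_cons_false] at h1
    have h2 := h.2 (Fin.cons true (basA n w))
    rw [basB_cons_true] at h2
    rw [h2, h1]⟩
  invFun k := ⟨fun v => k.1 (Fin.tail v), by
    intro v
    obtain ⟨b, w, rfl⟩ := exists_cons n v
    cases b
    · rw [basB_cons_false]
      simp [k.2 w]
    · rw [basB_cons_true]
      simp⟩
  left_inv h := by
    apply Subtype.ext
    funext v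
    obtain ⟨b, w, rfl⟩ := exists_cons n v
    cases b
    · simp
    · simp only [Fin.tail_cons]
      have h2 := h.2 (Fin.cons true w)
      rw [basB_cons_true] at h2
      exact h2
  right_inv k := by
    apply Subtype.ext
    funext w
    simp

def invA0Equiv : InvA 0 ≃ Bool where
  toFun h := h.1 (fun i => i.elim0)
  invFun c := ⟨fun _ => c, fun _ => rfl⟩
  left_inv h := by
    apply Subtype.ext
    funext v
    have : v = (fun i => i.elim0) := funext fun i => i.elim0
    rw [this]
  right_inv c := rfl

def invB0Equiv : InvB 0 ≃ Bool where
  toFun h := h.1 (fun i => i.elim0)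
  invFun c := ⟨fun _ => c, fun _ => rfl⟩
  left_inv h := by
    apply Subtype.ext
    funext v
    have : v = (fun i => i.elim0) := funext fun i => i.elim0
    rw [this]
  right_inv c := rfl

lemma card_inv (n : ℕ) :
    Nat.card (InvA n) = 2 ^ icn n ∧ Nat.card (InvB n) = 2 ^ icbn n := by
  induction n with
  | zero =>
    rw [Nat.card_congr invA0Equiv, Nat.card_congr invB0Equiv]
    simp [icn_zero, icbn_zero, Nat.card_eq_fintype_card]
  | succ n ih =>
    constructor
    · rw [Nat.card_congr (invAEquiv n), Nat.card_prod, ih.2, icn_succ,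
        Nat.card_eq_fintype_card]
      rw [Fintype.card_fun, Fintype.card_bool, card_V n, pow_add]
    · rw [Nat.card_congr (invBEquiv n), ih.1, icbn_succ]

/-- number of fixed points of `basA` at level `n` -/
noncomputable def fixA (n : ℕ) : ℕ :=
  (Finset.univ.filter (fun u : Fin n → Bool => basA n u = u)).card

lemma fixA_zero : fixA 0 = 1 := by
  have h : (Finset.univ.filter (fun u : Fin 0 → Bool => basA 0 u = u)) = Finset.univ :=
    Finset.filter_true_of_mem (fun u _ => (rfl : basA 0 u = u))
  unfold fixA
  rw [h, Finset.card_univ, card_V 0]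
  norm_num

lemma fixA_one : fixA 1 = 2 := by
  have h : (Finset.univ.filter (fun u : Fin 1 → Bool => basA 1 u = u)) = Finset.univ :=
    Finset.filter_true_of_mem (fun u _ => basA_one_eq u)
  unfold fixA
  rw [h, Finset.card_univ, card_V 1]
  norm_num

lemma basA_fix_iff (n : ℕ) (b : Bool) (w : Fin (n+1) → Bool) :
    basA (n+2) (Fin.cons b w) = Fin.cons b w ↔ b = true := by
  cases b
  · rw [basA_cons_false]
    simp only [Fin.cons_inj]
    constructor
    · rintro ⟨-, h⟩
      exact absurd h (basB_succ_ne n w)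
    · intro h; exact absurd h (by simp)
  · simp [basA_cons_true]

lemma fixA_succ_succ (n : ℕ) : fixA (n+2) = 2 ^ (n+1) := by
  unfold fixA
  have himg : Finset.univ.filter (fun u : Fin (n+2) → Bool => basA (n+2) u = u)
      = Finset.univ.image (fun w : Fin (n+1) → Bool => Fin.cons true w) := by
    ext v
    simp only [Finset.mem_filter, Finset.mem_univ, true_and, Finset.mem_image]
    constructor
    · intro hv
      obtain ⟨b, w, rfl⟩ := exists_cons (n+1) v
      have hb := (basA_fix_iff n b w).mp hv
      exact ⟨w, by rw [hb]⟩
    · rintro ⟨w, rfl⟩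
      exact (basA_fix_iff n true w).mpr rfl
  have hinj : Function.Injective (fun w : Fin (n+1) → Bool => (Fin.cons true w : Fin (n+2) → Bool)) := by
    intro w1 w2 h
    have h0 := congrArg (fun v : Fin (n+2) → Bool => Fin.tail v) h
    simpa [Fin.tail_cons] using h0
  rw [himg, Finset.card_image_of_injective _ hinj, Finset.card_univ, card_V (n+1)]

lemma bnl_true_iff (n : ℕ) (u : Fin n → Bool) : bnl n ((true, u)) ↔ basA n u ≠ u :=
  Iff.rfl

lemma bnl_false_iff (n : ℕ) (w : Fin n → Bool) : bnl n ((false, w)) ↔ basB n w ≠ w :=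
  Iff.rfl

lemma bnl_succ_false (n : ℕ) (z : Fin (n+1) → Bool) : bnl (n+1) ((false, z)) :=
  basB_succ_ne n z

lemma bnl_succ_true_cons_false (n : ℕ) (w : Fin n → Bool) :
    bnl (n+1) ((true, Fin.cons false w)) ↔ basB n w ≠ w := by
  show basA (n+1) (Fin.cons false w) ≠ Fin.cons false w ↔ _
  rw [basA_cons_false]
  simp [Fin.cons_inj]

lemma not_bnl_succ_true_cons_true (n : ℕ) (w : Fin n → Bool) :
    ¬ bnl (n+1) ((true, Fin.cons true w)) := by
  show ¬ basA (n+1) (Fin.cons true w) ≠ Fin.cons true w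
  rw [basA_cons_true]
  exact not_not.mpr rfl

/-- the forward map on edge sets -/
noncomputable def phiD (n : ℕ) (D : Finset (basilica n).Edge) (h : (Fin n → Bool) → Bool) :
    Finset (basilica (n+1)).Edge :=
  Finset.univ.filter (fun z =>
    (∃ w, z = ((true, Fin.cons false w) : (basilica (n+1)).Edge) ∧
        ((false, w) : (basilica n).Edge) ∈ D) ∨
    (∃ u, z = ((false, Fin.cons (h u) u) : (basilica (n+1)).Edge) ∧
        (((true, u) : (basilica n).Edge) ∈ D ∨ basA n u = u)))

lemma mem_phiD {n : ℕ} {D : Finset (basilica n).Edge} {h : (Fin n → Bool) → Bool}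
    {z : (basilica (n+1)).Edge} :
    z ∈ phiD n D h ↔
    (∃ w, z = ((true, Fin.cons false w) : (basilica (n+1)).Edge) ∧
        ((false, w) : (basilica n).Edge) ∈ D) ∨
    (∃ u, z = ((false, Fin.cons (h u) u) : (basilica (n+1)).Edge) ∧
        (((true, u) : (basilica n).Edge) ∈ D ∨ basA n u = u)) := by
  unfold phiD
  rw [Finset.mem_filter]
  simp only [Finset.mem_univ, true_and]

lemma phiD_bnl {n : ℕ} (D : BTrans n) (h : (Fin n → Bool) → Bool) :
    ∀ z ∈ phiD n D.1 h, bnl (n+1) z := by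
  intro z hz
  rcases mem_phiD.mp hz with ⟨w, rfl, hw⟩ | ⟨u, rfl, -⟩
  · exact (bnl_succ_true_cons_false n w).mpr (D.2.1 _ hw)
  · exact bnl_succ_false n _

lemma phiD_trans {n : ℕ} (D : BTrans n) (h : (Fin n → Bool) → Bool) :
    ∀ e, bnl (n+1) e → ∃! d, d ∈ phiD n D.1 h ∧ brel (n+1) e d := by
  rintro ⟨s, z⟩ hbnl
  obtain ⟨b, w, rfl⟩ := exists_cons n z
  cases s
  · -- b-edge at level n+1
    by_cases hfix : basA n w = w
    · refine ⟨((false, Fin.cons (h w) w) : (basilica (n+1)).Edge),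
        ⟨mem_phiD.mpr (Or.inr ⟨w, rfl, Or.inr hfix⟩),
         ⟨rfl, (sameCycleB_cons n b (h w) w w).mpr (Equiv.Perm.SameCycle.refl _ _)⟩⟩, ?_⟩
      rintro d'' ⟨hd''mem, hd''rel⟩
      have hs'' : (false : Bool) = d''.1 := hd''rel.1
      rcases mem_phiD.mp hd''mem with ⟨w₁, rfl, -⟩ | ⟨u, rfl, hu⟩
      · exact absurd hs''.symm (by simp)
      · have hsc : (basPermA n).SameCycle w u := by
          have := hd''rel.2
          exact (sameCycleB_cons n b (h u) w u).mp this
        have hwu : w = u := hsc.eq_of_left (show Function.IsFixedPt ⇑(basPermA n) w from hfix)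
        rw [← hwu]
    · have hbnl' : bnl n ((true, w)) := (bnl_true_iff n w).mpr hfix
      obtain ⟨d, ⟨hdD, hdrel⟩, hun⟩ := D.2.2 (true, w) hbnl'
      have hd1 : d.1 = true := hdrel.1.symm
      have hdeq : ((true, d.2) : (basilica n).Edge) = d := by
        rw [← hd1]
        exact Prod.mk.eta
      refine ⟨((false, Fin.cons (h d.2) d.2) : (basilica (n+1)).Edge),
        ⟨mem_phiD.mpr (Or.inr ⟨d.2, rfl, Or.inl (by rw [hdeq]; exact hdD)⟩),
         ⟨rfl, (sameCycleB_cons n b (h d.2) w d.2).mpr hdrel.2⟩⟩, ?_⟩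
      rintro d'' ⟨hd''mem, hd''rel⟩
      have hs'' : (false : Bool) = d''.1 := hd''rel.1
      rcases mem_phiD.mp hd''mem with ⟨w₁, rfl, -⟩ | ⟨u, rfl, hu⟩
      · exact absurd hs''.symm (by simp)
      · have hsc : (basPermA n).SameCycle w u := (sameCycleB_cons n b (h u) w u).mp hd''rel.2
        rcases hu with huD | hufix
        · have : ((true, u) : (basilica n).Edge) = d := hun (true, u) ⟨huD, ⟨rfl, hsc⟩⟩
          have hu2 : u = d.2 := congrArg Prod.snd this
          rw [hu2]
        · have hu_w : u = w :=
            hsc.symm.eq_of_left (show Function.IsFixedPt ⇑(basPermA n) u from hufix)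
          exact absurd (hu_w ▸ hufix) hfix
  · -- a-edge at level n+1
    cases b
    · -- (true, cons false w)
      have hw : basB n w ≠ w := (bnl_succ_true_cons_false n w).mp hbnl
      obtain ⟨d, ⟨hdD, hdrel⟩, hun⟩ := D.2.2 (false, w) ((bnl_false_iff n w).mpr hw)
      have hd1 : d.1 = false := hdrel.1.symm
      have hdeq : ((false, d.2) : (basilica n).Edge) = d := by
        rw [← hd1]
        exact Prod.mk.eta
      refine ⟨((true, Fin.cons false d.2) : (basilica (n+1)).Edge),
        ⟨mem_phiD.mpr (Or.inl ⟨d.2, rfl, by rw [hdeq]; exact hdD⟩),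
         ⟨rfl, (sameCycleA_cons_false n w d.2).mpr hdrel.2⟩⟩, ?_⟩
      rintro d'' ⟨hd''mem, hd''rel⟩
      have hs'' : (true : Bool) = d''.1 := hd''rel.1
      rcases mem_phiD.mp hd''mem with ⟨w₁, rfl, hw₁⟩ | ⟨u, rfl, -⟩
      · have hsc : (basPermB n).SameCycle w w₁ :=
          (sameCycleA_cons_false n w w₁).mp hd''rel.2
        have : ((false, w₁) : (basilica n).Edge) = d := hun (false, w₁) ⟨hw₁, ⟨rfl, hsc⟩⟩
        have hw2 : w₁ = d.2 := congrArg Prod.snd this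
        rw [hw2]
      · exact absurd hs''.symm (by simp)
    · exact absurd hbnl (not_bnl_succ_true_cons_true n w)

/-- the forward map -/
noncomputable def phiFull (n : ℕ) : BTrans n × InvA n → BTrans (n+1) :=
  fun p => ⟨phiD n p.1.1 p.2.1, phiD_bnl p.1 p.2.1, phiD_trans p.1 p.2.1⟩

lemma invA_sameCycle {n : ℕ} (h : InvA n) {u v : Fin n → Bool}
    (hs : (basPermA n).SameCycle u v) : h.1 u = h.1 v := by
  obtain ⟨k, -, hk⟩ := hs.exists_pow_eq'
  rw [← hk]
  clear hk
  induction k with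
  | zero => rfl
  | succ k ih =>
    rw [pow_succ', Equiv.Perm.mul_apply, basPermA_apply, h.2]
    exact ih

lemma mem_phiD_false {n : ℕ} (D : BTrans n) (h : (Fin n → Bool) → Bool) (w : Fin n → Bool) :
    ((false, w) : (basilica n).Edge) ∈ D.1 ↔
      ((true, Fin.cons false w) : (basilica (n+1)).Edge) ∈ phiD n D.1 h := by
  constructor
  · intro hw
    exact mem_phiD.mpr (Or.inl ⟨w, rfl, hw⟩)
  · intro hz
    rcases mem_phiD.mp hz with ⟨w₁, heq, hw₁⟩ | ⟨u, heq, -⟩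
    · have h2 : (Fin.cons false w : Fin (n+1) → Bool) = Fin.cons false w₁ :=
        congrArg Prod.snd heq
      have : w = w₁ := (Fin.cons_inj.mp h2).2
      rw [this]
      exact hw₁
    · exact absurd (congrArg Prod.fst heq) (by simp)

lemma mem_phiD_true {n : ℕ} (D : BTrans n) (h : (Fin n → Bool) → Bool) (u : Fin n → Bool)
    (hfix : basA n u ≠ u) :
    ((true, u) : (basilica n).Edge) ∈ D.1 ↔
      ∃ x, ((false, Fin.cons x u) : (basilica (n+1)).Edge) ∈ phiD n D.1 h := by
  constructor
  · intro hu
    exact ⟨h u, mem_phiD.mpr (Or.inr ⟨u, rfl, Or.inl hu⟩)⟩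
  · rintro ⟨x, hx⟩
    rcases mem_phiD.mp hx with ⟨w₁, heq, -⟩ | ⟨u₁, heq, hu₁⟩
    · exact absurd (congrArg Prod.fst heq) (by simp)
    · have h2 : (Fin.cons x u : Fin (n+1) → Bool) = Fin.cons (h u₁) u₁ :=
        congrArg Prod.snd heq
      have hu : u = u₁ := (Fin.cons_inj.mp h2).2
      rcases hu₁ with hD | hfix'
      · rw [hu]; exact hD
      · exact absurd (hu ▸ hfix') hfix

lemma phiD_val {n : ℕ} (D : BTrans n) (h : (Fin n → Bool) → Bool) (u : Fin n → Bool)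
    (x : Bool) (hx : ((false, Fin.cons x u) : (basilica (n+1)).Edge) ∈ phiD n D.1 h) :
    x = h u := by
  rcases mem_phiD.mp hx with ⟨w₁, heq, -⟩ | ⟨u₁, heq, -⟩
  · exact absurd (congrArg Prod.fst heq) (by simp)
  · have h2 : (Fin.cons x u : Fin (n+1) → Bool) = Fin.cons (h u₁) u₁ :=
      congrArg Prod.snd heq
    obtain ⟨hx1, hu1⟩ := Fin.cons_inj.mp h2
    rw [hx1, hu1]

lemma phiD_orbit_rep {n : ℕ} (D : BTrans n) (h : (Fin n → Bool) → Bool) (u : Fin n → Bool) :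
    ∃ u₀ x, (basPermA n).SameCycle u u₀ ∧
      ((false, Fin.cons x u₀) : (basilica (n+1)).Edge) ∈ phiD n D.1 h := by
  by_cases hfix : basA n u = u
  · exact ⟨u, h u, Equiv.Perm.SameCycle.refl _ _, mem_phiD.mpr (Or.inr ⟨u, rfl, Or.inr hfix⟩)⟩
  · obtain ⟨d, ⟨hdD, hdrel⟩, -⟩ := D.2.2 (true, u) ((bnl_true_iff n u).mpr hfix)
    have hd1 : d.1 = true := hdrel.1.symm
    have hdeq : ((true, d.2) : (basilica n).Edge) = d := by rw [← hd1]; exact Prod.mk.eta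
    refine ⟨d.2, h d.2, hdrel.2, mem_phiD.mpr (Or.inr ⟨d.2, rfl, Or.inl ?_⟩)⟩
    rw [hdeq]; exact hdD

lemma phiFull_inj (n : ℕ) : Function.Injective (phiFull n) := by
  rintro ⟨D₁, h₁⟩ ⟨D₂, h₂⟩ heq
  have hset : phiD n D₁.1 h₁.1 = phiD n D₂.1 h₂.1 := congrArg Subtype.val heq
  have hD : D₁ = D₂ := by
    apply Subtype.ext
    ext e
    rcases e with ⟨s, v⟩
    cases s
    · erw [mem_phiD_false D₁ h₁.1 v, mem_phiD_false D₂ h₂.1 v, hset]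
    · constructor
      · intro hmem
        have hfix : basA n v ≠ v := (bnl_true_iff n v).mp (D₁.2.1 _ hmem)
        erw [mem_phiD_true D₁ h₁.1 v hfix, hset, ← mem_phiD_true D₂ h₂.1 v hfix] at hmem
        exact hmem
      · intro hmem
        have hfix : basA n v ≠ v := (bnl_true_iff n v).mp (D₂.2.1 _ hmem)
        erw [mem_phiD_true D₂ h₂.1 v hfix, ← hset, ← mem_phiD_true D₁ h₁.1 v hfix] at hmem
        exact hmem
  refine Prod.ext hD (Subtype.ext (funext fun u => ?_))
  obtain ⟨u₀, x, hsc, hmem₁⟩ := phiD_orbit_rep D₁ h₁.1 u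
  have hmem₂ : ((false, Fin.cons x u₀) : (basilica (n+1)).Edge) ∈ phiD n D₂.1 h₂.1 := by
    rw [← hset]; exact hmem₁
  have hx₁ : x = h₁.1 u₀ := phiD_val D₁ h₁.1 u₀ x hmem₁
  have hx₂ : x = h₂.1 u₀ := phiD_val D₂ h₂.1 u₀ x hmem₂
  rw [invA_sameCycle h₁ hsc, invA_sameCycle h₂ hsc, ← hx₁, ← hx₂]

lemma sameCycle_nonfix {n : ℕ} {u v : Fin n → Bool}
    (hsc : (basPermA n).SameCycle u v) (hu : basA n u ≠ u) : basA n v ≠ v := by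
  intro hv
  apply hu
  rw [← basPermA_apply] at hv ⊢
  exact hsc.apply_eq_self_iff.mpr hv

lemma phiFull_surj (n : ℕ) : Function.Surjective (phiFull n) := by
  intro E
  have hrep0 : ∀ u : Fin n → Bool, ∃! d, d ∈ E.1 ∧
      brel (n+1) ((false, Fin.cons false u) : (basilica (n+1)).Edge) d :=
    fun u => E.2.2 _ (bnl_succ_false n _)
  choose rep hP hU using hrep0
  have hrep1 : ∀ u, (rep u).1 = false := fun u => ((hP u).2).1.symm
  have hdec : ∀ u, ∃ y u₀, rep u = ((false, Fin.cons y u₀) : (basilica (n+1)).Edge) ∧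
      (basPermA n).SameCycle u u₀ := by
    intro u
    obtain ⟨y, u₀, hv⟩ := exists_cons n ((rep u).2)
    refine ⟨y, u₀, ?_, ?_⟩
    · have : rep u = ((rep u).1, (rep u).2) := Prod.mk.eta.symm
      rw [this, hrep1 u, hv]
    · have hsc := ((hP u).2).2
      rw [hv] at hsc
      exact (sameCycleB_cons n false y u u₀).mp hsc
  have hrep_inv : ∀ u v, (basPermA n).SameCycle u v → rep u = rep v := by
    intro u v hsc
    obtain ⟨y, v₀, hv, hscv⟩ := hdec v
    have hres : rep v = rep u := hU u (rep v) ⟨(hP v).1, ⟨(hrep1 v).symm, by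
      rw [hv]
      exact (sameCycleB_cons n false y u v₀).mpr (hsc.trans hscv)⟩⟩
    exact hres.symm
  set h : (Fin n → Bool) → Bool := fun u => ((rep u).2) 0 with hh
  have hval : ∀ u y u₀, rep u = ((false, Fin.cons y u₀) : (basilica (n+1)).Edge) →
      h u = y := by
    intro u y u₀ hrepu
    rw [hh]
    simp only
    rw [hrepu]
    show (Fin.cons y u₀ : Fin (n+1) → Bool) 0 = y
    exact Fin.cons_zero _ _
  have hinv : ∀ v, h (basA n v) = h v := by
    intro v
    have hsc : (basPermA n).SameCycle (basA n v) v := by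
      rw [← basPermA_apply]
      exact Equiv.Perm.sameCycle_apply_left.mpr (Equiv.Perm.SameCycle.refl _ _)
    show (rep (basA n v)).2 0 = (rep v).2 0
    rw [hrep_inv _ _ hsc]
  set D : Finset (basilica n).Edge := Finset.univ.filter (fun e =>
    (e.1 = false ∧ ((true, Fin.cons false e.2) : (basilica (n+1)).Edge) ∈ E.1) ∨
    (e.1 = true ∧ basA n e.2 ≠ e.2 ∧
      ∃ x, ((false, Fin.cons x e.2) : (basilica (n+1)).Edge) ∈ E.1)) with hD
  have memD : ∀ e : (basilica n).Edge, e ∈ D ↔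
      (e.1 = false ∧ ((true, Fin.cons false e.2) : (basilica (n+1)).Edge) ∈ E.1) ∨
      (e.1 = true ∧ basA n e.2 ≠ e.2 ∧
        ∃ x, ((false, Fin.cons x e.2) : (basilica (n+1)).Edge) ∈ E.1) := by
    intro e
    rw [hD, Finset.mem_filter]
    simp only [Finset.mem_univ, true_and]
  -- rep of u equals any class member of E
  have hrep_eqmem : ∀ u x u₁, (basPermA n).SameCycle u u₁ →
      ((false, Fin.cons x u₁) : (basilica (n+1)).Edge) ∈ E.1 →
      rep u = ((false, Fin.cons x u₁) : (basilica (n+1)).Edge) := by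
    intro u x u₁ hsc hmem
    exact (hU u _ ⟨hmem, ⟨rfl, (sameCycleB_cons n false x u u₁).mpr hsc⟩⟩).symm
  have Dbnl : ∀ e ∈ D, bnl n e := by
    intro e he
    rcases (memD e).mp he with ⟨h1, h2⟩ | ⟨h1, h2, -⟩
    · have : bnl (n+1) ((true, Fin.cons false e.2)) := E.2.1 _ h2
      have hb := (bnl_succ_true_cons_false n e.2).mp this
      have : e = (false, e.2) := by rw [← h1]; exact Prod.mk.eta.symm
      rw [this]
      exact (bnl_false_iff n e.2).mpr hb
    · have : e = (true, e.2) := by rw [← h1]; exact Prod.mk.eta.symm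
      rw [this]
      exact (bnl_true_iff n e.2).mpr h2
  have Dtrans : ∀ e, bnl n e → ∃! d, d ∈ D ∧ brel n e d := by
    rintro ⟨s, v⟩ hbnl
    cases s
    · -- (false, v), b-edge at level n
      have hv : basB n v ≠ v := hbnl
      have hbnl' : bnl (n+1) ((true, Fin.cons false v)) :=
        (bnl_succ_true_cons_false n v).mpr hv
      obtain ⟨d', ⟨hd'mem, hd'rel⟩, hd'un⟩ := E.2.2 _ hbnl'
      have hd'1 : d'.1 = true := hd'rel.1.symm
      obtain ⟨c, w₀, hw₀⟩ := exists_cons n d'.2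
      have hc : c = false := by
        by_contra hc
        have : c = true := by cases c; exact absurd rfl hc; rfl
        rw [this] at hw₀
        have : d' = ((true, Fin.cons true w₀) : (basilica (n+1)).Edge) := by
          rw [← hw₀, ← hd'1]; exact Prod.mk.eta.symm
        rw [this] at hd'mem
        exact not_bnl_succ_true_cons_true n w₀ (E.2.1 _ hd'mem)
      rw [hc] at hw₀
      have hd'eq : d' = ((true, Fin.cons false w₀) : (basilica (n+1)).Edge) := by
        rw [← hw₀, ← hd'1]; exact Prod.mk.eta.symm
      have hscB : (basPermB n).SameCycle v w₀ := by
        have := hd'rel.2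
        rw [hw₀] at this
        exact (sameCycleA_cons_false n v w₀).mp this
      refine ⟨((false, w₀) : (basilica n).Edge), ⟨(memD _).mpr (Or.inl ⟨rfl, by
        rw [← hd'eq]; exact hd'mem⟩), ⟨rfl, hscB⟩⟩, ?_⟩
      rintro ⟨s₁, w₁⟩ ⟨hw₁D, hw₁rel⟩
      have hs₁ : s₁ = false := hw₁rel.1.symm
      subst hs₁
      rcases (memD _).mp hw₁D with ⟨-, hmem₁⟩ | ⟨habs, -⟩
      · have : ((true, Fin.cons false w₁) : (basilica (n+1)).Edge) = d' :=
          hd'un _ ⟨hmem₁, ⟨rfl, (sameCycleA_cons_false n v w₁).mpr hw₁rel.2⟩⟩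
        rw [hd'eq] at this
        have : (Fin.cons false w₁ : Fin (n+1) → Bool) = Fin.cons false w₀ :=
          congrArg Prod.snd this
        have := (Fin.cons_inj.mp this).2
        rw [this]
      · exact absurd habs (by simp)
    · -- (true, v), a-edge at level n
      have hv : basA n v ≠ v := hbnl
      obtain ⟨y, u₀, hrepv, hscv⟩ := hdec v
      have hu₀fix : basA n u₀ ≠ u₀ := sameCycle_nonfix hscv hv
      have hmemu₀ : ((false, Fin.cons y u₀) : (basilica (n+1)).Edge) ∈ E.1 := by
        rw [← hrepv]; exact (hP v).1
      refine ⟨((true, u₀) : (basilica n).Edge), ⟨(memD _).mpr (Or.inr ⟨rfl, hu₀fix,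
        ⟨y, hmemu₀⟩⟩), ⟨rfl, hscv⟩⟩, ?_⟩
      rintro ⟨s₁, u₁⟩ ⟨hu₁D, hu₁rel⟩
      have hs₁ : s₁ = true := hu₁rel.1.symm
      subst hs₁
      rcases (memD _).mp hu₁D with ⟨habs, -⟩ | ⟨-, -, x, hmem₁⟩
      · exact absurd habs (by simp)
      · have h1 : rep v = ((false, Fin.cons x u₁) : (basilica (n+1)).Edge) :=
          hrep_eqmem v x u₁ hu₁rel.2 hmem₁
        rw [hrepv] at h1
        have : (Fin.cons y u₀ : Fin (n+1) → Bool) = Fin.cons x u₁ :=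
          congrArg Prod.snd h1
        have := (Fin.cons_inj.mp this).2
        rw [← this]
  refine ⟨⟨⟨D, Dbnl, Dtrans⟩, ⟨h, hinv⟩⟩, ?_⟩
  apply Subtype.ext
  show phiD n D h = E.1
  ext z
  constructor
  · intro hz
    rcases mem_phiD.mp hz with ⟨w, rfl, hw⟩ | ⟨u, rfl, hu⟩
    · rcases (memD _).mp hw with ⟨-, hmem⟩ | ⟨habs, -⟩
      · exact hmem
      · exact absurd habs (by simp)
    · rcases hu with huD | hufix
      · rcases (memD _).mp huD with ⟨habs, -⟩ | ⟨-, -, x, hmem⟩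
        · exact absurd habs (by simp)
        · have h1 : rep u = ((false, Fin.cons x u) : (basilica (n+1)).Edge) :=
            hrep_eqmem u x u (Equiv.Perm.SameCycle.refl _ _) hmem
          have := hval u x u h1
          rw [this]
          exact hmem
      · obtain ⟨y, u₀, hrepu, hscu⟩ := hdec u
        have hfixu : Function.IsFixedPt ⇑(basPermA n) u := by
          show (basPermA n) u = u
          rw [basPermA_apply]; exact hufix
        have hu₀ : u = u₀ := hscu.eq_of_left hfixu
        rw [← hu₀] at hrepu
        have hhu : h u = y := hval u y u hrepu
        rw [hhu, ← hrepu]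
        exact (hP u).1
  · intro hz
    have hzbnl := E.2.1 z hz
    rcases z with ⟨s, zv⟩
    obtain ⟨b, w, rfl⟩ := exists_cons n zv
    cases s
    · -- (false, cons b w) ∈ E
      have h1 : rep w = ((false, Fin.cons b w) : (basilica (n+1)).Edge) :=
        hrep_eqmem w b w (Equiv.Perm.SameCycle.refl _ _) hz
      have hvw : h w = b := hval w b w h1
      refine mem_phiD.mpr (Or.inr ⟨w, by rw [hvw], ?_⟩)
      by_cases hfix : basA n w = w
      · exact Or.inr hfix
      · exact Or.inl ((memD _).mpr (Or.inr ⟨rfl, hfix, ⟨b, hz⟩⟩))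
    · cases b
      · exact mem_phiD.mpr (Or.inl ⟨w, rfl, (memD _).mpr (Or.inl ⟨rfl, hz⟩)⟩)
      · exact absurd hzbnl (not_bnl_succ_true_cons_true n w)

lemma bnl_zero (e : (basilica 0).Edge) : ¬ bnl 0 e := by
  rcases e with ⟨s, v⟩
  cases s <;> exact not_not.mpr rfl

lemma btrans_zero_val (D : BTrans 0) : D.1 = ∅ := by
  rcases D with ⟨D, hD1, -⟩
  refine Finset.eq_empty_of_forall_notMem fun e he => bnl_zero e (hD1 e he)

lemma card_btrans_zero : Nat.card (BTrans 0) = 1 := by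
  rw [Nat.card_eq_one_iff_unique]
  constructor
  · exact ⟨fun D D' => Subtype.ext ((btrans_zero_val D).trans (btrans_zero_val D').symm)⟩
  · exact ⟨⟨∅, fun e he => absurd he (Finset.notMem_empty e),
      fun e hbnl => absurd hbnl (bnl_zero e)⟩⟩

/-- pair `(QA n, QB n)` counting the `a`- and `b`-parts of a transversal -/
noncomputable def QAB : ℕ → ℕ × ℕ
  | 0 => (0, 0)
  | n+1 => ((QAB n).2, (QAB n).1 + fixA n)

noncomputable def QA (n : ℕ) : ℕ := (QAB n).1
noncomputable def QB (n : ℕ) : ℕ := (QAB n).2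

lemma QA_zero : QA 0 = 0 := rfl
lemma QB_zero : QB 0 = 0 := rfl
lemma QA_succ (n : ℕ) : QA (n+1) = QB n := rfl
lemma QB_succ (n : ℕ) : QB (n+1) = QA n + fixA n := rfl

lemma phiD_filter_true_eq {n : ℕ} (D : BTrans n) (h : (Fin n → Bool) → Bool) :
    (phiD n D.1 h).filter (fun e => e.1 = true) =
      (D.1.filter (fun e => e.1 = false)).image
        (fun e => ((true, Fin.cons false e.2) : (basilica (n+1)).Edge)) := by
  ext z
  erw [Finset.mem_filter, Finset.mem_image]
  constructor
  · rintro ⟨hz, hz1⟩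
    rcases mem_phiD.mp hz with ⟨w, rfl, hw⟩ | ⟨u, rfl, -⟩
    · exact ⟨(false, w), Finset.mem_filter.mpr ⟨hw, rfl⟩, rfl⟩
    · exact absurd hz1 (by simp)
  · rintro ⟨e, he, rfl⟩
    obtain ⟨heD, he1⟩ := Finset.mem_filter.mp he
    have : e = (false, e.2) := by rw [← he1]; exact Prod.mk.eta.symm
    refine ⟨mem_phiD.mpr (Or.inl ⟨e.2, rfl, by rw [← this]; exact heD⟩), rfl⟩

lemma phiD_filter_false_eq {n : ℕ} (D : BTrans n) (h : (Fin n → Bool) → Bool) :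
    (phiD n D.1 h).filter (fun e => e.1 = false) =
      (D.1.filter (fun e => e.1 = true)).image
        (fun e => ((false, Fin.cons (h e.2) e.2) : (basilica (n+1)).Edge)) ∪
      ((Finset.univ.filter (fun u : Fin n → Bool => basA n u = u)).image
        (fun u => ((false, Fin.cons (h u) u) : (basilica (n+1)).Edge))) := by
  ext z
  erw [Finset.mem_filter, Finset.mem_union, Finset.mem_image, Finset.mem_image]
  constructor
  · rintro ⟨hz, hz1⟩
    rcases mem_phiD.mp hz with ⟨w, rfl, -⟩ | ⟨u, rfl, hu⟩
    · exact absurd hz1 (by simp)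
    · rcases hu with huD | hufix
      · exact Or.inl ⟨(true, u), Finset.mem_filter.mpr ⟨huD, rfl⟩, rfl⟩
      · exact Or.inr ⟨u, Finset.mem_filter.mpr ⟨Finset.mem_univ u, hufix⟩, rfl⟩
  · rintro (⟨e, he, rfl⟩ | ⟨u, hu, rfl⟩)
    · obtain ⟨heD, he1⟩ := Finset.mem_filter.mp he
      have heq : e = (true, e.2) := by rw [← he1]; exact Prod.mk.eta.symm
      exact ⟨mem_phiD.mpr (Or.inr ⟨e.2, rfl, Or.inl (by rw [← heq]; exact heD)⟩), rfl⟩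
    · obtain ⟨-, hufix⟩ := Finset.mem_filter.mp hu
      exact ⟨mem_phiD.mpr (Or.inr ⟨u, rfl, Or.inr hufix⟩), rfl⟩

lemma trans_card : ∀ n (D : BTrans n),
    (D.1.filter (fun e => e.1 = true)).card = QA n ∧
    (D.1.filter (fun e => e.1 = false)).card = QB n := by
  intro n
  induction n with
  | zero =>
    intro D
    rw [btrans_zero_val D]
    simp [QA_zero, QB_zero]
  | succ n ih =>
    intro D'
    obtain ⟨⟨D, h⟩, rfl⟩ := phiFull_surj n D'
    have hval : (phiFull n (D, h)).1 = phiD n D.1 h.1 := rfl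
    constructor
    · erw [hval, phiD_filter_true_eq D h.1, Finset.card_image_of_injOn, (ih D).2, QA_succ]
      intro e₁ he₁ e₂ he₂ heq
      have h1 : e₁.1 = false := (Finset.mem_filter.mp he₁).2
      have h2 : e₂.1 = false := (Finset.mem_filter.mp he₂).2
      have h3 : (Fin.cons false e₁.2 : Fin (n+1) → Bool) = Fin.cons false e₂.2 :=
        congrArg Prod.snd heq
      have h4 : e₁.2 = e₂.2 := (Fin.cons_inj.mp h3).2
      exact Prod.ext (h1.trans h2.symm) h4
    · erw [hval, phiD_filter_false_eq D h.1, Finset.card_union_of_disjoint,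
        Finset.card_image_of_injOn, Finset.card_image_of_injOn, (ih D).1, QB_succ]
      · rfl
      · -- injective on fixed points
        intro u₁ hu₁ u₂ hu₂ heq
        have h3 : (Fin.cons (h.1 u₁) u₁ : Fin (n+1) → Bool) = Fin.cons (h.1 u₂) u₂ :=
          congrArg Prod.snd heq
        exact (Fin.cons_inj.mp h3).2
      · intro e₁ he₁ e₂ he₂ heq
        have h1 : e₁.1 = true := (Finset.mem_filter.mp he₁).2
        have h2 : e₂.1 = true := (Finset.mem_filter.mp he₂).2
        have h3 : (Fin.cons (h.1 e₁.2) e₁.2 : Fin (n+1) → Bool) = Fin.cons (h.1 e₂.2) e₂.2 :=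
          congrArg Prod.snd heq
        exact Prod.ext (h1.trans h2.symm) ((Fin.cons_inj.mp h3).2)
      · -- disjointness
        erw [Finset.disjoint_left]
        rintro z hz1 hz2
        rw [Finset.mem_image] at hz1 hz2
        obtain ⟨e, he, rfl⟩ := hz1
        obtain ⟨u, hu, hequ⟩ := hz2
        obtain ⟨heD, he1⟩ := Finset.mem_filter.mp he
        obtain ⟨-, hufix⟩ := Finset.mem_filter.mp hu
        have heq : e = (true, e.2) := by rw [← he1]; exact Prod.mk.eta.symm
        have hbnl : bnl n e := D.2.1 e heD
        rw [heq] at hbnl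
        have hnfix : basA n e.2 ≠ e.2 := hbnl
        have h3 : (Fin.cons (h.1 u) u : Fin (n+1) → Bool) = Fin.cons (h.1 e.2) e.2 :=
          congrArg Prod.snd hequ
        have := (Fin.cons_inj.mp h3).2
        rw [this] at hufix
        exact hnfix hufix

lemma card_split_fst {n : ℕ} (s : Finset (basilica n).Edge) :
    s.card = (s.filter (fun e => e.1 = true)).card + (s.filter (fun e => e.1 = false)).card := by
  classical
  have h1 : s.filter (fun e => e.1 = true) ∪ s.filter (fun e => e.1 = false) = s := by
    ext e
    simp only [Finset.mem_union, Finset.mem_filter]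
    cases he : e.1 <;> simp [he] <;> tauto
  have h2 : Disjoint (s.filter (fun e => e.1 = true)) (s.filter (fun e => e.1 = false)) := by
    rw [Finset.disjoint_left]
    intro e ha hb
    have h3 := (Finset.mem_filter.mp ha).2
    have h4 := (Finset.mem_filter.mp hb).2
    rw [h3] at h4
    exact absurd h4 (by simp)
  rw [← Finset.card_union_of_disjoint h2, h1]

lemma trans_card_total (n : ℕ) (D : BTrans n) : D.1.card = QA n + QB n := by
  obtain ⟨h1, h2⟩ := trans_card n D
  rw [card_split_fst D.1, h1, h2]

lemma nlE_zero : (nlE 0).card = 0 := by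
  rw [Finset.card_eq_zero]
  refine Finset.eq_empty_of_forall_notMem fun e he => bnl_zero e (mem_nlE.mp he)

lemma fixA_le (n : ℕ) : fixA n ≤ 2 ^ n := by
  unfold fixA
  calc (Finset.univ.filter (fun u : Fin n → Bool => basA n u = u)).card
      ≤ (Finset.univ : Finset (Fin n → Bool)).card := Finset.card_filter_le _ _
    _ = 2 ^ n := by rw [Finset.card_univ, card_V n]

lemma nlE_card_succ (n : ℕ) : (nlE (n+1)).card + fixA (n+1) = 2 ^ (n+2) := by
  classical
  have hsplit := card_split_fst (nlE (n+1))
  have htrue : (nlE (n+1)).filter (fun e => e.1 = true) =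
      (Finset.univ.filter (fun v : Fin (n+1) → Bool => ¬ basA (n+1) v = v)).image
        (fun v => ((true, v) : (basilica (n+1)).Edge)) := by
    ext z
    erw [Finset.mem_filter, Finset.mem_image, mem_nlE]
    constructor
    · rintro ⟨hz, hz1⟩
      refine ⟨z.2, Finset.mem_filter.mpr ⟨Finset.mem_univ _, ?_⟩, ?_⟩
      · have heq : z = (true, z.2) := by rw [← hz1]; exact Prod.mk.eta.symm
        rw [heq] at hz
        exact hz
      · rw [← hz1]; exact Prod.mk.eta
    · rintro ⟨v, hv, rfl⟩
      exact ⟨(Finset.mem_filter.mp hv).2, rfl⟩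
  have hfalse : (nlE (n+1)).filter (fun e => e.1 = false) =
      (Finset.univ : Finset (Fin (n+1) → Bool)).image
        (fun v => ((false, v) : (basilica (n+1)).Edge)) := by
    ext z
    erw [Finset.mem_filter, Finset.mem_image, mem_nlE]
    constructor
    · rintro ⟨-, hz1⟩
      exact ⟨z.2, Finset.mem_univ _, by rw [← hz1]; exact Prod.mk.eta⟩
    · rintro ⟨v, -, rfl⟩
      exact ⟨bnl_succ_false n v, by simp⟩
  have hinj1 : Set.InjOn (fun v : Fin (n+1) → Bool => ((true, v) : (basilica (n+1)).Edge))
      (Finset.univ.filter (fun v : Fin (n+1) → Bool => ¬ basA (n+1) v = v)) :=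
    fun v₁ _ v₂ _ heq => congrArg Prod.snd heq
  have hinj2 : Set.InjOn (fun v : Fin (n+1) → Bool => ((false, v) : (basilica (n+1)).Edge))
      (Finset.univ : Finset (Fin (n+1) → Bool)) :=
    fun v₁ _ v₂ _ heq => congrArg Prod.snd heq
  erw [htrue, hfalse, Finset.card_image_of_injOn hinj1, Finset.card_image_of_injOn hinj2]
    at hsplit
  have hneg : (Finset.univ.filter (fun v : Fin (n+1) → Bool => basA (n+1) v = v)).card +
      (Finset.univ.filter (fun v : Fin (n+1) → Bool => ¬ basA (n+1) v = v)).card =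
      (Finset.univ : Finset (Fin (n+1) → Bool)).card := by
    rw [← Finset.card_union_of_disjoint (Finset.disjoint_filter_filter_not _ _ _),
      Finset.filter_union_filter_not_eq]
  have hcards : (Finset.univ : Finset (Fin (n+1) → Bool)).card = 2 ^ (n+1) := by
    rw [Finset.card_univ, card_V (n+1)]
  have hE : Fintype.card (basilica (n+1)).Edge = 2 ^ (n+2) := by
    have : Fintype.card (basilica (n+1)).Edge = Fintype.card Bool * Fintype.card (Fin (n+1) → Bool) := by
      exact Fintype.card_prod Bool (Fin (n+1) → Bool)
    rw [this, card_V (n+1), Fintype.card_bool]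
    ring
  have hnle : (nlE (n+1)).card ≤ Fintype.card (basilica (n+1)).Edge := by
    calc (nlE (n+1)).card ≤ (Finset.univ : Finset (basilica (n+1)).Edge).card :=
          Finset.card_le_card (Finset.subset_univ _)
      _ = Fintype.card (basilica (n+1)).Edge := Finset.card_univ
  rw [hcards] at hneg
  have q1 : (2:ℕ) ^ (n+2) = 4 * 2 ^ n := by ring
  have q2 : (2:ℕ) ^ (n+1) = 2 * 2 ^ n := by ring
  unfold fixA
  omega

lemma nlE_identity : ∀ n, (nlE n).card + 1 = 2 ^ n + QA n + QB n := by
  intro n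
  induction n with
  | zero => simp [nlE_zero, QA_zero, QB_zero]
  | succ n ih =>
    rw [QA_succ, QB_succ]
    rcases n with _ | m
    · -- n = 0
      have h5 := nlE_card_succ 0
      rw [fixA_one] at h5
      rw [QA_zero, QB_zero, fixA_zero]
      norm_num at h5 ⊢
      omega
    · have f1 := nlE_card_succ (m+1)
      have f2 := nlE_card_succ m
      have f3 : fixA (m+1+1) = 2 ^ (m+1) := fixA_succ_succ m
      have p1 : (2:ℕ) ^ (m+1+1) = 2 * 2 ^ (m+1) := by ring
      have p2 : (2:ℕ) ^ (m+1+2) = 4 * 2 ^ (m+1) := by ring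
      have p3 : (2:ℕ) ^ (m+2) = 2 * 2 ^ (m+1) := by ring
      omega

/-- the exponent sequence -/
def en : ℕ → ℕ
  | 0 => 0
  | n+1 => en n + icn n

lemma card_btrans (n : ℕ) : Nat.card (BTrans n) = 2 ^ en n := by
  induction n with
  | zero => rw [card_btrans_zero]; rfl
  | succ n ih =>
    have hbij := Nat.card_eq_of_bijective (phiFull n) ⟨phiFull_inj n, phiFull_surj n⟩
    rw [← hbij, Nat.card_prod, ih, (card_inv n).1]
    show 2 ^ en n * 2 ^ icn n = 2 ^ (en n + icn n)
    rw [pow_add]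

lemma treeCount_eq_pow (n : ℕ) : (basilica n).treeCount = 2 ^ en n := by
  have hne : Nonempty (BTrans n) := by
    by_contra hc
    have hie : IsEmpty (BTrans n) := not_nonempty_iff.mp hc
    have h0 : Nat.card (BTrans n) = 0 := Nat.card_of_isEmpty
    rw [card_btrans n] at h0
    have hp : (0:ℕ) < 2 ^ en n := Nat.pow_pos (by norm_num)
    omega
  have hcard : ∀ D : BTrans n, D.1.card + (2 ^ n - 1) = (nlE n).card := by
    intro D
    have h1 := trans_card_total n D
    have h2 := nlE_identity n
    have h3 : 1 ≤ 2 ^ n := Nat.one_le_two_pow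
    omega
  rw [treeCount_eq_card_trans n hne hcard, card_btrans n]

lemma icn_succ_succ (n : ℕ) : icn (n+2) = 2^(n+1) + icn n := by
  rw [icn_succ, icbn_succ]

lemma icn_parity : ∀ k, 3 * icn (2*k) = 2^(2*k+1) + 1 ∧ 3 * icn (2*k+1) = 2^(2*k+2) + 2 := by
  intro k
  induction k with
  | zero =>
    constructor
    · norm_num [icn_zero]
    · norm_num [icn_succ, icbn_zero]
  | succ k ih =>
    obtain ⟨ih1, ih2⟩ := ih
    have e1 : icn (2*(k+1)) = 2^(2*k+1) + icn (2*k) := by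
      rw [show 2*(k+1) = (2*k)+2 by ring, icn_succ_succ]
    have e2 : icn (2*(k+1)+1) = 2^(2*k+2) + icn (2*k+1) := by
      rw [show 2*(k+1)+1 = (2*k+1)+2 by ring, icn_succ_succ]
    have p1 : (2:ℕ)^(2*(k+1)+1) = 4 * 2^(2*k+1) := by ring
    have p2 : (2:ℕ)^(2*(k+1)+2) = 4 * 2^(2*k+2) := by ring
    constructor <;> omega

lemma en_parity : ∀ k, 6 * en (2*k) + 4 = 2^(2*k+2) + 3*(2*k) ∧
    6 * en (2*k+1) + 5 = 2^(2*k+3) + 3*(2*k+1) := by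
  intro k
  induction k with
  | zero =>
    constructor
    · norm_num [en]
    · show 6 * en 1 + 5 = 2^3 + 3
      have : en 1 = 1 := rfl
      rw [this]
      norm_num
  | succ k ih =>
    obtain ⟨ih1, ih2⟩ := ih
    obtain ⟨ic1, ic2⟩ := icn_parity k
    have e1 : en (2*(k+1)) = en (2*k+1) + icn (2*k+1) := by
      rw [show 2*(k+1) = (2*k+1)+1 by ring]
      rfl
    have e2 : en (2*(k+1)+1) = en (2*(k+1)) + icn (2*(k+1)) := rfl
    have ic3 : 3 * icn (2*(k+1)) = 2^(2*(k+1)+1) + 1 := (icn_parity (k+1)).1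
    have p1 : (2:ℕ)^(2*(k+1)+2) = 4 * 2^(2*k+2) := by ring
    have p2 : (2:ℕ)^(2*(k+1)+3) = 8 * 2^(2*k+2) := by ring
    have p3 : (2:ℕ)^(2*(k+1)+1) = 2 * 2^(2*k+2) := by ring
    have p4 : (2:ℕ)^(2*k+3) = 2 * 2^(2*k+2) := by ring
    constructor <;> omega

theorem treeCount_basilica' (n : ℕ) (hn : 1 ≤ n) :
    (Odd n → (basilica n).treeCount = 2 ^ ((2 ^ (n + 2) + 3 * n - 5) / 6)) ∧
    (Even n → (basilica n).treeCount = 2 ^ ((2 ^ (n + 2) + 3 * n - 4) / 6)) := by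
  constructor
  · rintro ⟨k, hk⟩
    subst hk
    rw [treeCount_eq_pow]
    congr 1
    have h := (en_parity k).2
    have p : (2:ℕ)^(2*k+1+2) = 2^(2*k+3) := by ring
    have hdiv : (2^(2*k+1+2) + 3*(2*k+1) - 5) = 6 * en (2*k+1) := by omega
    rw [hdiv, Nat.mul_div_cancel_left _ (by norm_num)]
  · rintro ⟨k, hk⟩
    subst hk
    rw [treeCount_eq_pow]
    congr 1
    have h := (en_parity k).1
    have e : k + k = 2*k := by ring
    rw [e]
    have hdiv : (2^(2*k+2) + 3*(2*k) - 4) = 6 * en (2*k) := by omega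
    rw [hdiv, Nat.mul_div_cancel_left _ (by norm_num)]

/-- For each `n ≥ 1`, the number of spanning trees of the
level-`n` Schreier graph `B_n` of the Basilica group is
`τ(B_n) = 2^((2^(n+2) + 3n - 5)/6)` if `n` is odd and
`τ(B_n) = 2^((2^(n+2) + 3n - 4)/6)` if `n` is even. -/
theorem treeCount_basilica (n : ℕ) (hn : 1 ≤ n) :
    (Odd n → (basilica n).treeCount = 2 ^ ((2 ^ (n + 2) + 3 * n - 5) / 6)) ∧
    (Even n → (basilica n).treeCount = 2 ^ ((2 ^ (n + 2) + 3 * n - 4) / 6)) := by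
  exact treeCount_basilica' n hn
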